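/- Let (V,h) be an inner product space of dimension n ≥ 3 and for ψ ∈ Λ²V* let σ(ψ)(x,y,z,w) := 2ψ(x,y)h(z,w) + ψ(x,z)h(y,w) - ψ(y,z)h(x,w) - ψ(x,w)h(y,z) + ψ(y,w)h(x,z). Then σ is injective: if σ(ψ) = 0 then ψ = 0. -/

import Mathlib

/-- On an inner product space `(V,h)` of dimension `n ≥ 3`, the map
`σ` from alternating 2-forms to 4-tensors given by
`σ(ψ)(x,y,z,w) = 2ψ(x,y)h(z,w) + ψ(x,z)h(y,w) - ψ(y,z)h(x,w) - ψ(x,w)h(y,z)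
+ ψ(y,w)h(x,z)` is injective: if `σ(ψ) = 0` then `ψ = 0`. -/
theorem stmt10 (V : Type*) [AddCommGroup V] [Module ℝ V] [FiniteDimensional ℝ V]
    (hn : 3 ≤ Module.finrank ℝ V)
    (h : LinearMap.BilinForm ℝ V) (hsymm : h.IsSymm) (hnd : h.Nondegenerate)
    (ψ : LinearMap.BilinForm ℝ V) (hψ : ψ.IsAlt)
    (σψ : V → V → V → V → ℝ)
    (hσ : ∀ x y z w, σψ x y z w
      = 2 * ψ x y * h z w + ψ x z * h y w - ψ y z * h x w
        - ψ x w * h y z + ψ y w * h x z)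
    (hzero : ∀ x y z w, σψ x y z w = 0) :
    ψ = 0 := by
  -- Setting w = z kills four of the five terms:
  have key : ∀ x y z, ψ x y * h z z = 0 := by
    intro x y z
    have := hzero x y z z
    rw [hσ] at this
    nlinarith [this]
  -- There is some z with h z z ≠ 0.
  have hex : ∃ z : V, h z z ≠ 0 := by
    by_contra hc
    push_neg at hc
    have hx : ∀ x y : V, h x y = 0 := by
      intro x y
      have h1 := hc (x + y)
      have h2 := hc x
      have h3 := hc y
      have hs : (h x) y = (h y) x := by
        have := hsymm.eq x y
        simpa using this
      simp only [map_add, LinearMap.add_apply] at h1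
      linarith
    have hall : ∀ x : V, x = 0 := fun x => hnd.1 x (fun y => hx x y)
    have : Subsingleton V := ⟨fun a b => by rw [hall a, hall b]⟩
    have : Module.finrank ℝ V = 0 := Module.finrank_zero_of_subsingleton
    omega
  obtain ⟨z, hz⟩ := hex
  ext x y
  have := key x y z
  have := mul_eq_zero.mp this
  simp only [LinearMap.zero_apply]
  tauto
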